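/- arXiv:1403.6974 — 2 statements merged into one kernel-verified Lean document; each statement's English description precedes it below -/
import Mathlib

section
/- Suppose A has restricted isometry constant δ_{S+T}, and let 𝒮 and 𝒯 be disjoint index sets with |𝒮| + |𝒯| ≤ S + T. Then the spectral norm satisfies ‖A_𝒮* A_𝒯‖ ≤ δ_{S+T}. -/
open Matrix Finset

/-- Euclidean (ℓ2) norm of a finitely-indexed real vector. -/
noncomputable def enorm {ι : Type*} [Fintype ι] (x : ι → ℝ) : ℝ :=
  Real.sqrt (∑ i, x i ^ 2)

/-- `x` is `T`-sparse: it has at most `T` nonzero entries. -/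
def sparse {N : ℕ} (T : ℕ) (x : Fin N → ℝ) : Prop :=
  (Finset.univ.filter (fun i => x i ≠ 0)).card ≤ T

/-- Support of a vector as a finset. -/
noncomputable def fsupp {N : ℕ} (x : Fin N → ℝ) : Finset (Fin N) :=
  Finset.univ.filter (fun i => x i ≠ 0)

/-- Restricted isometry property with constant `δ` at sparsity level `T`. -/
def RIP {M N : ℕ} (A : Matrix (Fin M) (Fin N) ℝ) (T : ℕ) (δ : ℝ) : Prop :=
  ∀ x : Fin N → ℝ, sparse T x →
    (1 - δ) * _root_.enorm x ^ 2 ≤ _root_.enorm (A.mulVec x) ^ 2 ∧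
    _root_.enorm (A.mulVec x) ^ 2 ≤ (1 + δ) * _root_.enorm x ^ 2

/-- Column submatrix of `A` indexed by the finset `𝒯`. -/
def cols {M N : ℕ} (A : Matrix (Fin M) (Fin N) ℝ) (𝒯 : Finset (Fin N)) :
    Matrix (Fin M) 𝒯 ℝ := A.submatrix id (fun i => (i : Fin N))

/-- Pseudo-inverse `(Bᵀ B)⁻¹ Bᵀ` (full column rank assumed where used). -/
noncomputable def pinv {M : ℕ} {ι : Type*} [Fintype ι] [DecidableEq ι]
    (B : Matrix (Fin M) ι ℝ) : Matrix ι (Fin M) ℝ := (Bᵀ * B)⁻¹ * Bᵀ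

/-- `x` restricted to the index set `S` (zero off `S`). -/
def restr {N : ℕ} (x : Fin N → ℝ) (S : Finset (Fin N)) : Fin N → ℝ :=
  fun i => if i ∈ S then x i else 0

/-- Zero-pad a vector indexed by `S` to a full-length vector. -/
noncomputable def scatter {N : ℕ} (S : Finset (Fin N)) (v : S → ℝ) : Fin N → ℝ :=
  fun i => if h : i ∈ S then v ⟨i, h⟩ else 0

lemma enorm_sq {ι : Type*} [Fintype ι] (x : ι → ℝ) : _root_.enorm x ^ 2 = ∑ i, x i ^ 2 := by
  rw [_root_.enorm, Real.sq_sqrt]; positivity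

lemma scatter_mulVec {M N : ℕ} (A : Matrix (Fin M) (Fin N) ℝ) (S : Finset (Fin N))
    (v : S → ℝ) : A.mulVec (scatter S v) = (cols A S).mulVec v := by
  funext m
  simp only [Matrix.mulVec, dotProduct, cols, scatter, Matrix.submatrix_apply, id]
  rw [← Finset.sum_subset (Finset.subset_univ S) (by intro j _ hj; simp [hj])]
  rw [← Finset.sum_attach S]
  exact Finset.sum_congr rfl (by intro j _; simp [j.2])

lemma scatter_sq {N : ℕ} (S : Finset (Fin N)) (v : S → ℝ) :
    ∑ i, scatter S v i ^ 2 = ∑ i, v i ^ 2 := by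
  simp only [scatter]
  rw [← Finset.sum_subset (Finset.subset_univ S) (by intro j _ hj; simp [hj])]
  rw [← Finset.sum_attach S]
  exact Finset.sum_congr rfl (by intro j _; simp [j.2])

lemma key {M N S T : ℕ} (A : Matrix (Fin M) (Fin N) ℝ) (δ : ℝ)
    (hRIP : RIP A (S + T) δ) (u v : Fin N → ℝ)
    (hsum : sparse (S + T) (u + v)) (hdiff : sparse (S + T) (u - v))
    (horth : ∑ i, u i * v i = 0) :
    ∑ m, A.mulVec u m * A.mulVec v m ≤ δ / 2 * (∑ i, u i ^ 2 + ∑ i, v i ^ 2) := by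
  classical
  obtain ⟨h1l, h1r⟩ := hRIP (u + v) hsum
  obtain ⟨h2l, h2r⟩ := hRIP (u - v) hdiff
  rw [enorm_sq, enorm_sq] at h1r h2l
  have e1 : ∑ i, (u + v) i ^ 2 = ∑ i, u i ^ 2 + ∑ i, v i ^ 2 := by
    have : ∀ i, (u + v) i ^ 2 = u i ^ 2 + 2 * (u i * v i) + v i ^ 2 := by
      intro i; simp [Pi.add_apply]; ring
    simp_rw [this]
    rw [Finset.sum_add_distrib, Finset.sum_add_distrib, ← Finset.mul_sum, horth]
    ring
  have e2 : ∑ i, (u - v) i ^ 2 = ∑ i, u i ^ 2 + ∑ i, v i ^ 2 := by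
    have : ∀ i, (u - v) i ^ 2 = u i ^ 2 - 2 * (u i * v i) + v i ^ 2 := by
      intro i; simp [Pi.sub_apply]; ring
    simp_rw [this]
    rw [Finset.sum_add_distrib, Finset.sum_sub_distrib, ← Finset.mul_sum, horth]
    ring
  have e3 : ∑ m, A.mulVec (u + v) m ^ 2
      = ∑ m, A.mulVec u m ^ 2 + 2 * ∑ m, A.mulVec u m * A.mulVec v m
        + ∑ m, A.mulVec v m ^ 2 := by
    rw [Matrix.mulVec_add]
    simp_rw [Pi.add_apply, add_sq]
    rw [Finset.sum_add_distrib, Finset.sum_add_distrib, Finset.mul_sum]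
    ring_nf
  have e4 : ∑ m, A.mulVec (u - v) m ^ 2
      = ∑ m, A.mulVec u m ^ 2 - 2 * ∑ m, A.mulVec u m * A.mulVec v m
        + ∑ m, A.mulVec v m ^ 2 := by
    rw [Matrix.mulVec_sub]
    simp_rw [Pi.sub_apply, sub_sq]
    rw [Finset.sum_add_distrib, Finset.sum_sub_distrib, Finset.mul_sum]
    ring_nf
  rw [e1, e3] at h1r
  rw [e2, e4] at h2l
  linarith

theorem stmt3 {M N S T : ℕ} (A : Matrix (Fin M) (Fin N) ℝ) (δ : ℝ)
    (hδ0 : 0 ≤ δ) (hδ1 : δ < 1) (hRIP : RIP A (S + T) δ)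
    (𝒮 𝒯 : Finset (Fin N)) (hdisj : Disjoint 𝒮 𝒯)
    (hcard : 𝒮.card + 𝒯.card ≤ S + T) :
    ∀ x : 𝒯 → ℝ,
      _root_.enorm (((cols A 𝒮)ᵀ * cols A 𝒯).mulVec x) ≤ δ * _root_.enorm x := by
  classical
  intro x
  set w : 𝒮 → ℝ := ((cols A 𝒮)ᵀ * cols A 𝒯).mulVec x with hw
  have hwnn : 0 ≤ _root_.enorm w := Real.sqrt_nonneg _
  have hxnn : 0 ≤ _root_.enorm x := Real.sqrt_nonneg _
  by_cases hx : _root_.enorm x = 0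
  · -- x = 0
    have hsx : ∑ i, x i ^ 2 = 0 := by
      have := enorm_sq x; rw [hx] at this; linarith
    have hx0 : x = 0 := by
      funext i
      have := (Finset.sum_eq_zero_iff_of_nonneg (fun i _ => sq_nonneg (x i))).mp hsx
        i (Finset.mem_univ i)
      exact pow_eq_zero_iff (two_ne_zero) |>.mp this
    have hw0 : w = 0 := by rw [hw, hx0]; simp
    rw [hw0, hx0]
    simp [_root_.enorm]
  · have hxpos : 0 < _root_.enorm x := lt_of_le_of_ne hxnn (Ne.symm hx)
    by_cases hw0 : _root_.enorm w = 0
    · rw [hw0]; positivity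
    · have hwpos : 0 < _root_.enorm w := lt_of_le_of_ne hwnn (Ne.symm hw0)
      set c : ℝ := _root_.enorm x / _root_.enorm w with hc
      have hcpos : 0 < c := div_pos hxpos hwpos
      set u : Fin N → ℝ := scatter 𝒮 (c • w) with hu
      set v : Fin N → ℝ := scatter 𝒯 x with hv
      -- supports
      have hsupp : ∀ (y : Fin N → ℝ), (∀ i, y i ≠ 0 → i ∈ 𝒮 ∪ 𝒯) →
          sparse (S + T) y := by
        intro y hy
        unfold sparse
        calc (Finset.univ.filter (fun i => y i ≠ 0)).card
            ≤ (𝒮 ∪ 𝒯).card := Finset.card_le_card (by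
              intro i hi
              exact hy i (Finset.mem_filter.mp hi).2)
          _ = 𝒮.card + 𝒯.card := Finset.card_union_of_disjoint hdisj
          _ ≤ S + T := hcard
      have hsum : sparse (S + T) (u + v) := by
        apply hsupp
        intro i hi
        by_contra hns
        simp only [Finset.mem_union, not_or] at hns
        apply hi
        simp [hu, hv, scatter, hns.1, hns.2]
      have hdiff : sparse (S + T) (u - v) := by
        apply hsupp
        intro i hi
        by_contra hns
        simp only [Finset.mem_union, not_or] at hns
        apply hi
        simp [hu, hv, scatter, hns.1, hns.2]
      have horth : ∑ i, u i * v i = 0 := by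
        apply Finset.sum_eq_zero
        intro i _
        by_cases hiS : i ∈ 𝒮
        · have hiT : i ∉ 𝒯 := Finset.disjoint_left.mp hdisj hiS
          simp [hu, hv, scatter, hiT]
        · simp [hu, hv, scatter, hiS]
      have hkey := key A δ hRIP u v hsum hdiff horth
      -- compute dot product
      have hdot : ∑ m, A.mulVec u m * A.mulVec v m = c * _root_.enorm w ^ 2 := by
        have h1 : A.mulVec u = (cols A 𝒮).mulVec (c • w) := scatter_mulVec ..
        have h2 : A.mulVec v = (cols A 𝒯).mulVec x := scatter_mulVec ..
        have h3 : ∑ m, (cols A 𝒮).mulVec (c • w) m * (cols A 𝒯).mulVec x m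
            = (c • w) ⬝ᵥ ((cols A 𝒮)ᵀ * (cols A 𝒯)).mulVec x := by
          rw [← Matrix.mulVec_mulVec, Matrix.dotProduct_mulVec,
            Matrix.vecMul_transpose]
          rfl
        rw [h1, h2, h3, ← hw, enorm_sq]
        simp only [dotProduct, Pi.smul_apply, smul_eq_mul]
        rw [Finset.mul_sum]
        exact Finset.sum_congr rfl (by intro s _; ring)
      have husq : ∑ i, u i ^ 2 = c ^ 2 * _root_.enorm w ^ 2 := by
        rw [hu, scatter_sq, enorm_sq, Finset.mul_sum]
        exact Finset.sum_congr rfl (by intro s _; simp only [Pi.smul_apply, smul_eq_mul]; ring)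
      have hvsq : ∑ i, v i ^ 2 = _root_.enorm x ^ 2 := by
        rw [hv, scatter_sq, enorm_sq]
      rw [hdot, husq, hvsq] at hkey
      have hcw : c * _root_.enorm w = _root_.enorm x := by
        rw [hc, div_mul_cancel₀ _ hw0]
      have h1 : c * _root_.enorm w ^ 2 = _root_.enorm x * _root_.enorm w := by
        rw [pow_two, ← mul_assoc, hcw]
      have h2 : c ^ 2 * _root_.enorm w ^ 2 = _root_.enorm x ^ 2 := by
        rw [pow_two, pow_two, pow_two]; nlinarith [hcw]
      rw [h1, h2] at hkey
      nlinarith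
end

section
/- Suppose A has restricted isometry constant δ_T. Let 𝒯 be an index set and x a vector such that |𝒯 ∪ supp(x)| ≤ T. Then ‖A_𝒯* A x_{𝒯ᶜ}‖ ≤ δ_T ‖x_{𝒯ᶜ}‖, where x_{𝒯ᶜ} denotes x restricted to the complement of 𝒯 (zero on 𝒯). -/
open Matrix Finset

theorem stmt4 {M N T : ℕ} (A : Matrix (Fin M) (Fin N) ℝ) (δ : ℝ)
    (hδ0 : 0 ≤ δ) (hδ1 : δ < 1) (hRIP : RIP A T δ)
    (𝒯 : Finset (Fin N)) (x : Fin N → ℝ)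
    (hcard : (𝒯 ∪ fsupp x).card ≤ T) :
    _root_.enorm ((cols A 𝒯)ᵀ.mulVec (A.mulVec (restr x 𝒯ᶜ))) ≤ δ * _root_.enorm (restr x 𝒯ᶜ) := by
  classical
  set x' : Fin N → ℝ := restr x 𝒯ᶜ with hx'def
  set w : {i // i ∈ 𝒯} → ℝ := (cols A 𝒯)ᵀ.mulVec (A.mulVec x') with hwdef
  set W : ℝ := ∑ j, w j ^ 2 with hWdef
  set S : ℝ := ∑ i, x' i ^ 2 with hSdef
  have hWnn : (0:ℝ) ≤ W := Finset.sum_nonneg fun _ _ => sq_nonneg _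
  have hSnn : (0:ℝ) ≤ S := Finset.sum_nonneg fun _ _ => sq_nonneg _
  have hwj : ∀ j : {i // i ∈ 𝒯}, w j = ∑ m, A m (↑j) * (A.mulVec x') m := by
    intro j
    rw [hwdef]
    simp [cols, Matrix.mulVec, dotProduct, Matrix.transpose_apply,
      Matrix.submatrix_apply]
  have henorm : ∀ {ι : Type} [Fintype ι] (v : ι → ℝ), _root_.enorm v ^ 2 = ∑ i, v i ^ 2 := by
    intro ι _ v
    exact Real.sq_sqrt (Finset.sum_nonneg fun _ _ => sq_nonneg _)
  have hx'supp : ∀ i, x' i ≠ 0 → i ∉ 𝒯 ∧ x i ≠ 0 := by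
    intro i hi
    rw [hx'def] at hi
    unfold restr at hi
    by_cases h : i ∈ 𝒯ᶜ
    · rw [if_pos h] at hi
      exact ⟨Finset.mem_compl.mp h, hi⟩
    · rw [if_neg h] at hi
      exact absurd rfl hi
  have key : ∀ t : ℝ, 0 ≤ t → 2 * (t * W) ≤ δ * (t ^ 2 * W + S) := by
    intro t ht
    set u : Fin N → ℝ := fun i => if h : i ∈ 𝒯 then t * w ⟨i, h⟩ else 0 with hu
    have hu0 : ∀ i ∉ 𝒯, u i = 0 := fun i hi => dif_neg hi
    have hux : ∀ i, u i * x' i = 0 := by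
      intro i
      by_cases h : i ∈ 𝒯
      · have hx0 : x' i = 0 := by
          rw [hx'def]; unfold restr
          rw [if_neg (by simpa using h)]
        rw [hx0, mul_zero]
      · rw [hu0 i h, zero_mul]
    have husq : ∑ i, u i ^ 2 = t ^ 2 * W := by
      rw [← Finset.sum_subset (Finset.subset_univ 𝒯)
        (fun i _ hi => by rw [hu0 i hi]; ring)]
      rw [← Finset.sum_attach 𝒯 (fun i => u i ^ 2)]
      rw [hWdef, Finset.mul_sum, Finset.univ_eq_attach]
      apply Finset.sum_congr rfl
      intro j _
      rw [hu]
      simp only [dif_pos j.2]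
      ring
    have hsparse : ∀ v : Fin N → ℝ, (∀ i, v i ≠ 0 → i ∈ 𝒯 ∪ fsupp x) → sparse T v := by
      intro v hv
      refine le_trans (Finset.card_le_card ?_) hcard
      intro i hi
      exact hv i (by simpa using hi)
    have hsupp_pm : ∀ (c : ℝ) (i : Fin N), u i + c * x' i ≠ 0 → i ∈ 𝒯 ∪ fsupp x := by
      intro c i hi
      by_cases h : i ∈ 𝒯
      · exact Finset.mem_union_left _ h
      · refine Finset.mem_union_right _ ?_
        rw [hu0 i h, zero_add] at hi
        have hx'i : x' i ≠ 0 := fun h0 => hi (by rw [h0, mul_zero])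
        exact Finset.mem_filter.mpr ⟨Finset.mem_univ _, (hx'supp i hx'i).2⟩
    have hp : sparse T (u + x') := hsparse _ (fun i hi => hsupp_pm 1 i (by simpa using hi))
    have hq : sparse T (u - x') := hsparse _ (fun i hi => by
      refine hsupp_pm (-1) i ?_
      simpa [sub_eq_add_neg, neg_one_mul] using hi)
    have hpsq : ∑ i, (u + x') i ^ 2 = t ^ 2 * W + S := by
      have : ∀ i : Fin N, (u + x') i ^ 2 = u i ^ 2 + x' i ^ 2 + 2 * (u i * x' i) := by
        intro i; simp only [Pi.add_apply]; ring
      simp only [this, Finset.sum_add_distrib]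
      simp only [hux, mul_zero, Finset.sum_const_zero, add_zero]
      rw [husq, hSdef]
    have hqsq : ∑ i, (u - x') i ^ 2 = t ^ 2 * W + S := by
      have : ∀ i : Fin N, (u - x') i ^ 2 = u i ^ 2 + x' i ^ 2 - 2 * (u i * x' i) := by
        intro i; simp only [Pi.sub_apply]; ring
      simp only [this, hux, mul_zero, sub_zero, Finset.sum_add_distrib]
      rw [husq, hSdef]
    obtain ⟨-, h1⟩ := hRIP (u + x') hp
    obtain ⟨h2, -⟩ := hRIP (u - x') hq
    rw [henorm, henorm, hpsq] at h1
    rw [henorm, henorm, hqsq] at h2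
    have hinner : ∑ m, (A.mulVec u) m * (A.mulVec x') m = t * W := by
      have hswap : ∑ m, (A.mulVec u) m * (A.mulVec x') m
          = ∑ i, u i * ∑ m, A m i * (A.mulVec x') m := by
        simp only [Matrix.mulVec, dotProduct, Finset.sum_mul]
        rw [Finset.sum_comm]
        refine Finset.sum_congr rfl fun i _ => ?_
        rw [Finset.mul_sum]
        exact Finset.sum_congr rfl fun m _ => by ring
      rw [hswap]
      rw [← Finset.sum_subset (Finset.subset_univ 𝒯)
        (fun i _ hi => by rw [hu0 i hi]; ring)]
      rw [← Finset.sum_attach 𝒯 (fun i => u i * ∑ m, A m i * (A.mulVec x') m)]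
      rw [hWdef, Finset.mul_sum, Finset.univ_eq_attach]
      refine Finset.sum_congr rfl fun j _ => ?_
      rw [← hwj j, hu]
      simp only [dif_pos j.2]
      ring
    have hpolar : ∑ m, (A.mulVec (u + x')) m ^ 2 - ∑ m, (A.mulVec (u - x')) m ^ 2
        = 4 * (t * W) := by
      rw [Matrix.mulVec_add, Matrix.mulVec_sub, ← hinner, ← Finset.sum_sub_distrib,
        Finset.mul_sum]
      refine Finset.sum_congr rfl fun m _ => ?_
      simp only [Pi.add_apply, Pi.sub_apply]
      ring
    nlinarith [h1, h2, hpolar]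
  show Real.sqrt W ≤ δ * Real.sqrt S
  rcases eq_or_lt_of_le hSnn with hS0 | hSpos
  · have hx0 : ∀ i, x' i = 0 := by
      intro i
      have h := (Finset.sum_eq_zero_iff_of_nonneg
        (fun i _ => sq_nonneg (x' i))).mp hS0.symm i (Finset.mem_univ i)
      exact pow_eq_zero_iff (two_ne_zero) |>.mp h
    have hAx0 : A.mulVec x' = 0 := by
      have : x' = 0 := funext hx0
      rw [this, Matrix.mulVec_zero]
    have hW0 : W = 0 := by
      rw [hWdef]
      refine Finset.sum_eq_zero fun j _ => ?_
      rw [hwj j, hAx0]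
      simp
    rw [hW0, Real.sqrt_zero]
    positivity
  · rcases eq_or_lt_of_le hWnn with hW0 | hWpos
    · rw [← hW0, Real.sqrt_zero]
      positivity
    · have hapos : 0 < Real.sqrt W := Real.sqrt_pos.mpr hWpos
      have hbpos : 0 < Real.sqrt S := Real.sqrt_pos.mpr hSpos
      set a := Real.sqrt W with ha
      set b := Real.sqrt S with hb
      have ha2 : a ^ 2 = W := Real.sq_sqrt hWnn
      have hb2 : b ^ 2 = S := Real.sq_sqrt hSnn
      have hk := key (b / a) (by positivity)
      rw [div_pow, ← ha2, ← hb2] at hk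
      have hane : a ≠ 0 := ne_of_gt hapos
      rw [show 2 * (b / a * a ^ 2) = 2 * (b * a) * (a / a) by ring,
        div_self hane, mul_one, div_mul_cancel₀ _ (pow_ne_zero 2 hane)] at hk
      nlinarith [hk, hapos, hbpos]
end
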